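/- Let v₋ > 0. There exist positive constants C and δ* such that for any δ ∈ (0, δ*) and any v, w > 0 with |1/w - 1/v₋| ≤ δ, if either Φ(v/w) < δ or |1/v - 1/w| < δ, then |v - w|² ≤ C·Φ(v/w). -/

import Mathlib

noncomputable def Phi (z : ℝ) : ℝ := z - 1 - Real.log z

lemma phi_sqrt_aux (z : ℝ) (hz : 0 < z) : (Real.sqrt z - 1) ^ 2 ≤ Phi z := by
  have hs : Real.sqrt z ^ 2 = z := Real.sq_sqrt hz.le
  have hlog : Real.log (Real.sqrt z) ≤ Real.sqrt z - 1 :=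
    Real.log_le_sub_one_of_pos (Real.sqrt_pos.2 hz)
  have hlz : Real.log z = 2 * Real.log (Real.sqrt z) := by
    rw [Real.log_sqrt hz.le]; ring
  unfold Phi
  nlinarith [Real.sqrt_nonneg z]

set_option maxHeartbeats 1000000 in
/-- The relative entropy controls the squared distance when it (or `|1/v - 1/w|`) is small. -/
theorem Phi_controls_squared_distance (vm : ℝ) (hvm : 0 < vm) :
    ∃ C δs : ℝ, 0 < C ∧ 0 < δs ∧
      ∀ δ ∈ Set.Ioo (0 : ℝ) δs, ∀ v w : ℝ, 0 < v → 0 < w →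
        |1 / w - 1 / vm| ≤ δ →
        (Phi (v / w) < δ ∨ |1 / v - 1 / w| < δ) →
        |v - w| ^ 2 ≤ C * Phi (v / w) := by
  refine ⟨64 * vm ^ 2, min (1 / (4 * vm)) 1, by positivity, ?_, ?_⟩
  · exact lt_min (by positivity) one_pos
  rintro δ ⟨hδ0, hδs⟩ v w hv hw hwvm hcase
  have hδ1 : δ < 1 := lt_of_lt_of_le hδs (min_le_right _ _)
  have hδ2 : δ < 1 / (4 * vm) := lt_of_lt_of_le hδs (min_le_left _ _)
  obtain ⟨hab1, hab2⟩ := abs_le.1 hwvm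
  -- bounds on w
  have heq1 : 1 / vm - 1 / (4 * vm) = 3 / (4 * vm) := by field_simp; ring
  have hw1 : 3 / (4 * vm) < 1 / w := by linarith
  have hwle : w < 2 * vm := by
    rw [div_lt_div_iff₀ (by positivity) hw] at hw1
    nlinarith
  have hw1' : 3 / (4 * vm) < 1 / w := by linarith
  have hwge : vm / 2 < w := by
    have heq2 : 1 / vm + 1 / (4 * vm) ≤ 2 / vm := by
      rw [div_add_div _ _ (ne_of_gt hvm) (by positivity), div_le_div_iff₀ (by positivity) hvm]
      nlinarith
    have h2 : 1 / w < 2 / vm := by linarith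
    rw [div_lt_div_iff₀ hw hvm] at h2
    linarith
  set z := v / w with hzdef
  have hz0 : 0 < z := div_pos hv hw
  have hvz : v = w * z := by rw [hzdef]; field_simp [hw.ne']
  have hp := phi_sqrt_aux z hz0
  have hs : Real.sqrt z ^ 2 = z := Real.sq_sqrt hz0.le
  have hsn : 0 ≤ Real.sqrt z := Real.sqrt_nonneg z
  have hΦ0 : 0 ≤ Phi z := le_trans (sq_nonneg _) hp
  have hzle : z ≤ 9 := by
    rcases hcase with h | h
    · have h2 : (Real.sqrt z - 1) ^ 2 < 1 := lt_of_le_of_lt hp (h.trans hδ1)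
      nlinarith
    · -- |1/v - 1/w| < δ gives v bounded
      obtain ⟨hcd1, _⟩ := abs_lt.1 h
      have h1 : 1 / w - δ < 1 / v := by linarith
      have heq3 : 3 / (4 * vm) - 1 / (4 * vm) = 1 / (2 * vm) := by field_simp; ring
      have h2 : 1 / (2 * vm) < 1 / v := by linarith
      have hvle : v < 2 * vm := by
        rw [div_lt_div_iff₀ (by positivity) hv] at h2
        linarith
      -- z = v / w ≤ 2vm / (vm/2) = 4
      rw [hzdef, div_le_iff₀ hw]
      nlinarith
  have hsle : Real.sqrt z ≤ 3 := by nlinarith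
  rw [sq_abs]
  have key : (z - 1) ^ 2 ≤ 16 * Phi z := by
    have h1 : (Real.sqrt z - 1) ^ 2 * (Real.sqrt z + 1) ^ 2 ≤ Phi z * (Real.sqrt z + 1) ^ 2 :=
      mul_le_mul_of_nonneg_right hp (sq_nonneg _)
    nlinarith [sq_nonneg (Real.sqrt z + 1)]
  have hw2 : w ^ 2 ≤ 4 * vm ^ 2 := by nlinarith
  calc (v - w) ^ 2 = w ^ 2 * (z - 1) ^ 2 := by rw [hvz]; ring
    _ ≤ (4 * vm ^ 2) * (16 * Phi z) := by
        apply mul_le_mul hw2 key (sq_nonneg _) (by positivity)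
    _ = 64 * vm ^ 2 * Phi z := by ring
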